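/- arXiv:2504.02142 — 2 statements merged into one kernel-verified Lean document; each statement's English description precedes it below -/
import Mathlib

section
/- Let G_p, G_c be independent random variables valued in (0,1] with E[G_c] - E[G_p] = delta > 0 and common variance sigma^2. Then P(L(G_p) <= L(G_c)) <= 1 - (delta^2/4)^2 / (sigma^2 + delta^2/4)^2, where L(G) = -log G; in particular, as sigma -> 0 the probability that a loss-based threshold ranks the poison sample below the clean sample tends to 0. -/
open MeasureTheory ProbabilityTheory

/-- Cantelli's one-sided inequality. -/
lemma cantelli_aux {Ω : Type*} [MeasurableSpace Ω] (μ : Measure Ω) [IsProbabilityMeasure μ]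
    (X : Ω → ℝ) (hX : MemLp X 2 μ) {t : ℝ} (ht : 0 < t) :
    (μ {ω | t ≤ X ω - ∫ x, X x ∂μ}).toReal ≤ variance X μ / (variance X μ + t ^ 2) := by
  set m := ∫ x, X x ∂μ with hm
  set v := variance X μ with hv
  have hv0 : 0 ≤ v := variance_nonneg X μ
  set u := v / t with hu
  have hu0 : 0 ≤ u := div_nonneg hv0 ht.le
  have htu : 0 < t + u := by positivity
  have hXm : MemLp (fun ω => X ω - m) 2 μ := hX.sub (memLp_const m)
  have hYm : MemLp (fun ω => X ω - m + u) 2 μ := hXm.add (memLp_const u)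
  have hf_int : Integrable (fun ω => (X ω - m + u) ^ 2) μ := by
    have := hYm.integrable_sq
    simpa [sq] using this
  have hXint : Integrable X μ := hX.integrable one_le_two
  have hXmint : Integrable (fun ω => X ω - m) μ := hXint.sub (integrable_const m)
  have hsq_int : Integrable (fun ω => (X ω - m) ^ 2) μ := by
    have := hXm.integrable_sq
    simpa [sq] using this
  have hvar : ∫ ω, (X ω - m) ^ 2 ∂μ = v := by
    rw [hv, variance_eq_integral hX.aestronglyMeasurable.aemeasurable]
  have hXm0 : ∫ ω, (X ω - m) ∂μ = 0 := by
    rw [integral_sub hXint (integrable_const m)]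
    simp [hm]
  have hfint_eq : ∫ ω, (X ω - m + u) ^ 2 ∂μ = v + u ^ 2 := by
    have heq : (fun ω => (X ω - m + u) ^ 2)
        = fun ω => (X ω - m) ^ 2 + (2 * u * (X ω - m) + u ^ 2) := by
      funext ω; ring
    have h2a : Integrable (fun ω => 2 * u * (X ω - m)) μ := hXmint.const_mul (2 * u)
    have h2 : Integrable (fun ω => 2 * u * (X ω - m) + u ^ 2) μ := h2a.add (integrable_const _)
    rw [heq, integral_add hsq_int h2, integral_add h2a (integrable_const _),
      integral_const_mul, hXm0, hvar]
    simp
  have hsub : {ω | t ≤ X ω - m} ⊆ {ω | (t + u) ^ 2 ≤ (X ω - m + u) ^ 2} := by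
    intro ω hω
    have h1 : t + u ≤ X ω - m + u := by
      have := hω; simp only [Set.mem_setOf_eq] at this; linarith
    exact pow_le_pow_left₀ htu.le h1 2
  have hmarkov := mul_meas_ge_le_integral_of_nonneg (μ := μ)
    (f := fun ω => (X ω - m + u) ^ 2) (ae_of_all _ fun ω => sq_nonneg _) hf_int ((t + u) ^ 2)
  rw [hfint_eq] at hmarkov
  have hmono : (μ {ω | t ≤ X ω - m}).toReal
      ≤ (μ {x | (t + u) ^ 2 ≤ (x |> fun ω => (X ω - m + u) ^ 2)}).toReal := by
    exact ENNReal.toReal_mono (measure_ne_top μ _) (measure_mono hsub)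
  have hkey : (μ {ω | t ≤ X ω - m}).toReal ≤ (v + u ^ 2) / (t + u) ^ 2 := by
    rw [le_div_iff₀ (by positivity)]
    calc (μ {ω | t ≤ X ω - m}).toReal * (t + u) ^ 2
        ≤ (μ {x | (t + u) ^ 2 ≤ (X x - m + u) ^ 2}).toReal * (t + u) ^ 2 := by
          apply mul_le_mul_of_nonneg_right _ (by positivity)
          exact hmono
      _ ≤ v + u ^ 2 := by rw [mul_comm]; exact hmarkov
  have halg : (v + u ^ 2) / (t + u) ^ 2 = v / (v + t ^ 2) := by
    have ht0 : t ≠ 0 := ht.ne'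
    have hvt : v + t ^ 2 ≠ 0 := by positivity
    rw [hu]
    field_simp
    ring
  rw [halg] at hkey
  exact hkey

/-- Complement formulation of Theorem 1: for independent `G_p, G_c` valued in `(0,1]`
with mean gap `δ = μ_c - μ_p > 0` and common variance `σ²`, the probability that the
cross-entropy loss `L(G) = -log G` ranks the poison below the clean sample satisfies
`P(L(G_p) ≤ L(G_c)) ≤ 1 - (δ²/4)² / (σ² + δ²/4)²`. -/
theorem loss_misranking_prob_le
    {Ω : Type*} [MeasurableSpace Ω] (μ : Measure Ω) [IsProbabilityMeasure μ]
    (Gp Gc : Ω → ℝ) (hGp : Measurable Gp) (hGc : Measurable Gc)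
    (hrp : ∀ ω, Gp ω ∈ Set.Ioc (0 : ℝ) 1) (hrc : ∀ ω, Gc ω ∈ Set.Ioc (0 : ℝ) 1)
    (hind : IndepFun Gp Gc μ)
    (δ σ : ℝ) (hδ : (∫ ω, Gc ω ∂μ) - (∫ ω, Gp ω ∂μ) = δ) (hδpos : 0 < δ)
    (hvp : variance Gp μ = σ ^ 2) (hvc : variance Gc μ = σ ^ 2) :
    μ {ω | -Real.log (Gp ω) ≤ -Real.log (Gc ω)} ≤
      ENNReal.ofReal (1 - (δ ^ 2 / 4) ^ 2 / (σ ^ 2 + δ ^ 2 / 4) ^ 2) := by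
  set mp := ∫ ω, Gp ω ∂μ with hmp
  set mc := ∫ ω, Gc ω ∂μ with hmc
  set t := δ / 2 with htdef
  have htpos : 0 < t := by positivity
  have hp2 : MemLp Gp 2 μ := MemLp.of_bound hGp.aestronglyMeasurable 1
    (ae_of_all _ fun ω => by
      have h := hrp ω; rw [Real.norm_eq_abs, abs_le]; constructor <;> [linarith [h.1]; exact h.2])
  have hc2 : MemLp Gc 2 μ := MemLp.of_bound hGc.aestronglyMeasurable 1
    (ae_of_all _ fun ω => by
      have h := hrc ω; rw [Real.norm_eq_abs, abs_le]; constructor <;> [linarith [h.1]; exact h.2])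
  have hσ2 : (0:ℝ) ≤ σ ^ 2 := hvp ▸ variance_nonneg Gp μ
  -- Cantelli bound for Gp
  have hEp : (μ {ω | t ≤ Gp ω - mp}).toReal ≤ σ ^ 2 / (σ ^ 2 + t ^ 2) := by
    have h := cantelli_aux μ Gp hp2 htpos
    rwa [hvp, ← hmp] at h
  -- Cantelli bound for Gc (applied to -Gc)
  have hEc : (μ {ω | t ≤ mc - Gc ω}).toReal ≤ σ ^ 2 / (σ ^ 2 + t ^ 2) := by
    have h := cantelli_aux μ (fun ω => -Gc ω) hc2.neg htpos
    have hint : ∫ x, -Gc x ∂μ = -mc := by rw [integral_neg]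
    have hvneg : variance (fun ω => -Gc ω) μ = σ ^ 2 := by
      have h1 : (fun ω => -Gc ω) = fun ω => (-1 : ℝ) * Gc ω := by funext ω; ring
      rw [h1, variance_const_mul, hvc]; ring
    rw [hvneg, hint] at h
    have hset : {ω | t ≤ -Gc ω - -mc} = {ω | t ≤ mc - Gc ω} := by
      ext ω; simp only [Set.mem_setOf_eq]
      constructor <;> intro h' <;> linarith
    rwa [hset] at h
  -- complements
  have hEpm : MeasurableSet {ω | t ≤ Gp ω - mp} :=
    measurableSet_le measurable_const (hGp.sub measurable_const)
  have hEcm : MeasurableSet {ω | t ≤ mc - Gc ω} :=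
    measurableSet_le measurable_const (measurable_const.sub hGc)
  -- independence of complements
  have hcompl_p : {ω | t ≤ Gp ω - mp}ᶜ = Gp ⁻¹' Set.Iio (mp + t) := by
    ext ω; simp only [Set.mem_compl_iff, Set.mem_setOf_eq, Set.mem_preimage, Set.mem_Iio, not_le]
    constructor <;> intro h <;> linarith
  have hcompl_c : {ω | t ≤ mc - Gc ω}ᶜ = Gc ⁻¹' Set.Ioi (mc - t) := by
    ext ω; simp only [Set.mem_compl_iff, Set.mem_setOf_eq, Set.mem_preimage, Set.mem_Ioi, not_le]
    constructor <;> intro h <;> linarith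
  have hindep : μ ({ω | t ≤ Gp ω - mp}ᶜ ∩ {ω | t ≤ mc - Gc ω}ᶜ)
      = μ ({ω | t ≤ Gp ω - mp}ᶜ) * μ ({ω | t ≤ mc - Gc ω}ᶜ) := by
    rw [hcompl_p, hcompl_c]
    exact hind.measure_inter_preimage_eq_mul _ _ measurableSet_Iio measurableSet_Ioi
  -- target set is contained in the union
  have hsubset : {ω | -Real.log (Gp ω) ≤ -Real.log (Gc ω)}
      ⊆ ({ω | t ≤ Gp ω - mp}ᶜ ∩ {ω | t ≤ mc - Gc ω}ᶜ)ᶜ := by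
    intro ω hω hmem
    obtain ⟨h1, h2⟩ := hmem
    simp only [Set.mem_compl_iff, Set.mem_setOf_eq, not_le] at h1 h2
    exfalso
    -- h1 : Gp ω - mp < t, h2 : mc - Gc ω < t
    have hlt : Gp ω < Gc ω := by
      have : mc - mp = δ := by rw [hmp, hmc, hδ]
      have : mp + t = mc - t := by rw [htdef]; linarith
      linarith
    have hlog : Real.log (Gp ω) < Real.log (Gc ω) :=
      Real.log_lt_log (hrp ω).1 hlt
    simp only [Set.mem_setOf_eq] at hω
    linarith
  -- real number computations
  have hprob_le : μ {ω | -Real.log (Gp ω) ≤ -Real.log (Gc ω)}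
      ≤ μ (({ω | t ≤ Gp ω - mp}ᶜ ∩ {ω | t ≤ mc - Gc ω}ᶜ)ᶜ) := measure_mono hsubset
  have hq : σ ^ 2 / (σ ^ 2 + t ^ 2) ≤ 1 := by
    rw [div_le_one (by positivity)]; nlinarith
  have hpc : (μ ({ω | t ≤ Gp ω - mp}ᶜ)).toReal = 1 - (μ {ω | t ≤ Gp ω - mp}).toReal := by
    rw [prob_compl_eq_one_sub hEpm,
      ENNReal.toReal_sub_of_le prob_le_one ENNReal.one_ne_top, ENNReal.toReal_one]
  have hcc : (μ ({ω | t ≤ mc - Gc ω}ᶜ)).toReal = 1 - (μ {ω | t ≤ mc - Gc ω}).toReal := by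
    rw [prob_compl_eq_one_sub hEcm,
      ENNReal.toReal_sub_of_le prob_le_one ENNReal.one_ne_top, ENNReal.toReal_one]
  have hlow : t ^ 2 / (σ ^ 2 + t ^ 2) ≤ (μ ({ω | t ≤ Gp ω - mp}ᶜ)).toReal := by
    rw [hpc]
    have : t ^ 2 / (σ ^ 2 + t ^ 2) = 1 - σ ^ 2 / (σ ^ 2 + t ^ 2) := by
      field_simp
      ring
    rw [this]; linarith
  have hlow' : t ^ 2 / (σ ^ 2 + t ^ 2) ≤ (μ ({ω | t ≤ mc - Gc ω}ᶜ)).toReal := by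
    rw [hcc]
    have : t ^ 2 / (σ ^ 2 + t ^ 2) = 1 - σ ^ 2 / (σ ^ 2 + t ^ 2) := by
      field_simp
      ring
    rw [this]; linarith
  have hmeasint : MeasurableSet ({ω | t ≤ Gp ω - mp}ᶜ ∩ {ω | t ≤ mc - Gc ω}ᶜ) :=
    hEpm.compl.inter hEcm.compl
  have hcompl_val : (μ (({ω | t ≤ Gp ω - mp}ᶜ ∩ {ω | t ≤ mc - Gc ω}ᶜ)ᶜ)).toReal
      = 1 - (μ ({ω | t ≤ Gp ω - mp}ᶜ)).toReal * (μ ({ω | t ≤ mc - Gc ω}ᶜ)).toReal := by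
    rw [prob_compl_eq_one_sub hmeasint,
      ENNReal.toReal_sub_of_le prob_le_one ENNReal.one_ne_top, ENNReal.toReal_one,
      hindep, ENNReal.toReal_mul]
  have hfinal : (μ (({ω | t ≤ Gp ω - mp}ᶜ ∩ {ω | t ≤ mc - Gc ω}ᶜ)ᶜ)).toReal
      ≤ 1 - (t ^ 2 / (σ ^ 2 + t ^ 2)) ^ 2 := by
    rw [hcompl_val]
    have hnn : (0:ℝ) ≤ t ^ 2 / (σ ^ 2 + t ^ 2) := by positivity
    nlinarith [mul_le_mul hlow hlow' hnn (ENNReal.toReal_nonneg)]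
  have hrhs_eq : 1 - (t ^ 2 / (σ ^ 2 + t ^ 2)) ^ 2
      = 1 - (δ ^ 2 / 4) ^ 2 / (σ ^ 2 + δ ^ 2 / 4) ^ 2 := by
    have ht2 : t ^ 2 = δ ^ 2 / 4 := by rw [htdef]; ring
    rw [div_pow, ht2]
  calc μ {ω | -Real.log (Gp ω) ≤ -Real.log (Gc ω)}
      ≤ μ (({ω | t ≤ Gp ω - mp}ᶜ ∩ {ω | t ≤ mc - Gc ω}ᶜ)ᶜ) := hprob_le
    _ ≤ ENNReal.ofReal (1 - (δ ^ 2 / 4) ^ 2 / (σ ^ 2 + δ ^ 2 / 4) ^ 2) := by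
        rw [← hrhs_eq]
        rw [← ENNReal.ofReal_toReal (measure_ne_top μ _)]
        exact ENNReal.ofReal_le_ofReal hfinal
end

section
/- Let X, Y be independent real random variables with E[X] = mu_x, E[Y] = mu_y, mu_x < mu_y, Var(X) = sigma_x^2, Var(Y) = sigma_y^2 (both finite). Then with t = (mu_y - mu_x)/2, P(X < Y) >= (t^2/(sigma_x^2 + t^2)) * (t^2/(sigma_y^2 + t^2)). -/
open MeasureTheory ProbabilityTheory

lemma variance_sub_const' {Ω : Type*} [MeasurableSpace Ω] (μ : Measure Ω) [IsProbabilityMeasure μ]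
    (Z : Ω → ℝ) (hZ : MemLp Z 2 μ) (c : ℝ) :
    variance (fun ω => Z ω - c) μ = variance Z μ := by
  have hint : Integrable Z μ := hZ.integrable one_le_two
  have hI : (∫ ω, (Z ω - c) ∂μ) = (∫ ω, Z ω ∂μ) - c := by
    rw [integral_sub hint (integrable_const c)]; simp
  unfold variance
  rw [evariance_eq_lintegral_ofReal, evariance_eq_lintegral_ofReal]
  congr 1
  refine lintegral_congr fun ω => ?_
  congr 1
  simp only [hI]
  ring

/-- Cantelli's inequality for a mean-zero random variable. -/
lemma cantelli_zero {Ω : Type*} [MeasurableSpace Ω] (μ : Measure Ω) [IsProbabilityMeasure μ]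
    (Z : Ω → ℝ) (hZ : MemLp Z 2 μ) (hmean : (∫ ω, Z ω ∂μ) = 0)
    (t : ℝ) (ht : 0 < t) :
    μ {ω | t ≤ Z ω} ≤ ENNReal.ofReal (variance Z μ / (variance Z μ + t ^ 2)) := by
  set v := variance Z μ with hv
  have hv0 : 0 ≤ v := variance_nonneg _ _
  set u : ℝ := v / t with hu
  have hu0 : 0 ≤ u := div_nonneg hv0 ht.le
  -- the function (Z + u)^2
  have hZu : MemLp (fun ω => Z ω + u) 2 μ := hZ.add (memLp_const u)
  have hint_sq : Integrable (fun ω => (Z ω + u) ^ 2) μ := by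
    have := hZu.integrable_sq
    simpa using this
  have hintZ : Integrable Z μ := hZ.integrable one_le_two
  -- compute the integral of (Z+u)^2
  have hvar_eq : v = ∫ ω, Z ω ^ 2 ∂μ := by
    have := variance_of_integral_eq_zero hZ.aestronglyMeasurable.aemeasurable hmean
    simpa using this
  have hIsq : (∫ ω, (Z ω + u) ^ 2 ∂μ) = v + u ^ 2 := by
    have hexp : ∀ ω, (Z ω + u) ^ 2 = Z ω ^ 2 + (2 * u) * Z ω + u ^ 2 := fun ω => by ring
    simp_rw [hexp]
    rw [integral_add (by
        exact (by simpa using hZ.integrable_sq : Integrable (fun ω => Z ω ^ 2) μ).add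
          (hintZ.const_mul _)) (integrable_const _),
      integral_add (by simpa using hZ.integrable_sq : Integrable (fun ω => Z ω ^ 2) μ)
        (hintZ.const_mul _), integral_const_mul, hmean, hvar_eq]
    simp
  -- Markov's inequality
  have hmarkov := mul_meas_ge_le_integral_of_nonneg
    (ae_of_all _ fun ω => sq_nonneg (Z ω + u)) hint_sq ((t + u) ^ 2)
  rw [hIsq] at hmarkov
  have hsubset : {ω | t ≤ Z ω} ⊆ {ω | (t + u) ^ 2 ≤ (Z ω + u) ^ 2} := by
    intro ω hω
    have h1 : t + u ≤ Z ω + u := by exact add_le_add_left hω u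
    exact pow_le_pow_left₀ (by positivity) h1 2
  have hmono : μ {ω | t ≤ Z ω} ≤ μ {ω | (t + u) ^ 2 ≤ (Z ω + u) ^ 2} := measure_mono hsubset
  have hne : μ {ω | (t + u) ^ 2 ≤ (Z ω + u) ^ 2} ≠ ⊤ := measure_ne_top _ _
  have htu : (0:ℝ) < (t + u) ^ 2 := by positivity
  have hkey : (μ {ω | (t + u) ^ 2 ≤ (Z ω + u) ^ 2}).toReal ≤ v / (v + t ^ 2) := by
    have h1 : (μ {ω | (t + u) ^ 2 ≤ (Z ω + u) ^ 2}).toReal ≤ (v + u ^ 2) / (t + u) ^ 2 := by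
      rw [le_div_iff₀ htu]
      rw [measureReal_def] at hmarkov; linarith [hmarkov]
    refine h1.trans_eq ?_
    have ht' : t ≠ 0 := ht.ne'
    have hvt : v + t ^ 2 ≠ 0 := by positivity
    rw [hu]
    field_simp
    ring
  calc μ {ω | t ≤ Z ω} ≤ μ {ω | (t + u) ^ 2 ≤ (Z ω + u) ^ 2} := hmono
    _ = ENNReal.ofReal ((μ {ω | (t + u) ^ 2 ≤ (Z ω + u) ^ 2}).toReal) :=
        (ENNReal.ofReal_toReal hne).symm
    _ ≤ ENNReal.ofReal (v / (v + t ^ 2)) := ENNReal.ofReal_le_ofReal hkey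

/-- One-sided bound: `P(Z < E Z + t) ≥ t²/(Var Z + t²)`. -/
lemma cantelli_lt {Ω : Type*} [MeasurableSpace Ω] (μ : Measure Ω) [IsProbabilityMeasure μ]
    (Z : Ω → ℝ) (hZm : Measurable Z) (hZ : MemLp Z 2 μ)
    (t : ℝ) (ht : 0 < t) :
    ENNReal.ofReal (t ^ 2 / (variance Z μ + t ^ 2)) ≤ μ {ω | Z ω < (∫ ω, Z ω ∂μ) + t} := by
  set e := ∫ ω, Z ω ∂μ with he
  set W : Ω → ℝ := fun ω => Z ω - e with hW
  have hWmem : MemLp W 2 μ := hZ.sub (memLp_const e)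
  have hWmean : (∫ ω, W ω ∂μ) = 0 := by
    rw [hW]
    rw [integral_sub (hZ.integrable one_le_two) (integrable_const e)]
    simp [he]
  have hWvar : variance W μ = variance Z μ := variance_sub_const' μ Z hZ e
  have hcant := cantelli_zero μ W hWmem hWmean t ht
  rw [hWvar] at hcant
  set v := variance Z μ with hv
  have hv0 : 0 ≤ v := variance_nonneg _ _
  have hvt : (0:ℝ) < v + t ^ 2 := by positivity
  have hset : {ω | Z ω < e + t} = {ω | t ≤ W ω}ᶜ := by
    ext ω; simp [hW, not_le]; constructor <;> intro h <;> linarith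
  have hmeas : MeasurableSet {ω | t ≤ W ω} := by
    have : Measurable W := hZm.sub measurable_const
    exact measurableSet_le measurable_const this
  rw [hset, measure_compl hmeas (measure_ne_top _ _), measure_univ]
  refine ENNReal.le_sub_of_add_le_right (measure_ne_top _ _) ?_
  calc ENNReal.ofReal (t ^ 2 / (v + t ^ 2)) + μ {ω | t ≤ W ω}
      ≤ ENNReal.ofReal (t ^ 2 / (v + t ^ 2)) + ENNReal.ofReal (v / (v + t ^ 2)) :=
        add_le_add_right hcant _
    _ = ENNReal.ofReal (t ^ 2 / (v + t ^ 2) + v / (v + t ^ 2)) := by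
        rw [ENNReal.ofReal_add (by positivity) (by positivity)]
    _ = 1 := by
        rw [← add_div, add_comm (t^2) v, div_self hvt.ne']
        simp

/-- Generalization of Theorem 1's argument to unequal variances: for independent real
random variables `X, Y` with means `μ_x < μ_y` and finite variances `σ_x², σ_y²`,
setting `t = (μ_y - μ_x)/2`, one has
`P(X < Y) ≥ (t²/(σ_x² + t²)) * (t²/(σ_y² + t²))`. -/
theorem prob_lt_ge_product_unequal_variances
    {Ω : Type*} [MeasurableSpace Ω] (μ : Measure Ω) [IsProbabilityMeasure μ]
    (X Y : Ω → ℝ) (hX : Measurable X) (hY : Measurable Y)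
    (hLx : MemLp X 2 μ) (hLy : MemLp Y 2 μ)
    (hind : IndepFun X Y μ)
    (μx μy σx σy : ℝ)
    (hμx : (∫ ω, X ω ∂μ) = μx) (hμy : (∫ ω, Y ω ∂μ) = μy) (hlt : μx < μy)
    (hvx : variance X μ = σx ^ 2) (hvy : variance Y μ = σy ^ 2) :
    μ {ω | X ω < Y ω} ≥
      ENNReal.ofReal
        ((((μy - μx) / 2) ^ 2 / (σx ^ 2 + ((μy - μx) / 2) ^ 2)) *
          (((μy - μx) / 2) ^ 2 / (σy ^ 2 + ((μy - μx) / 2) ^ 2))) := by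
  set t : ℝ := (μy - μx) / 2 with htdef
  have ht : 0 < t := by simp [htdef]; linarith
  set m : ℝ := (μx + μy) / 2 with hmdef
  have hm1 : μx + t = m := by rw [htdef, hmdef]; ring
  have hm2 : μy - t = m := by rw [htdef, hmdef]; ring
  -- bound for X
  have hA : ENNReal.ofReal (t ^ 2 / (σx ^ 2 + t ^ 2)) ≤ μ {ω | X ω < m} := by
    have := cantelli_lt μ X hX hLx t ht
    rw [hμx, hvx, hm1] at this
    exact this
  -- bound for Y via -Y
  have hB : ENNReal.ofReal (t ^ 2 / (σy ^ 2 + t ^ 2)) ≤ μ {ω | m < Y ω} := by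
    have hnegY : MemLp (fun ω => -Y ω) 2 μ := hLy.neg
    have := cantelli_lt μ (fun ω => -Y ω) hY.neg hnegY t ht
    have hI : (∫ ω, -Y ω ∂μ) = -μy := by rw [integral_neg, hμy]
    have hV : variance (fun ω => -Y ω) μ = σy ^ 2 := by
      have := variance_const_mul (-1) Y μ
      simp only [neg_one_mul] at this
      rw [this, hvy]; ring
    rw [hI, hV] at this
    have hset : {ω | -Y ω < -μy + t} = {ω | m < Y ω} := by
      ext ω
      simp only [Set.mem_setOf_eq]
      rw [← hm2]
      constructor <;> intro h <;> linarith
    rw [hset] at this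
    exact this
  -- independence
  have hAB : μ ({ω | X ω < m} ∩ {ω | m < Y ω}) = μ {ω | X ω < m} * μ {ω | m < Y ω} := by
    have h1 : {ω | X ω < m} = X ⁻¹' (Set.Iio m) := rfl
    have h2 : {ω | m < Y ω} = Y ⁻¹' (Set.Ioi m) := rfl
    rw [h1, h2]
    exact hind.measure_inter_preimage_eq_mul _ _ measurableSet_Iio measurableSet_Ioi
  have hsub : {ω | X ω < m} ∩ {ω | m < Y ω} ⊆ {ω | X ω < Y ω} := by
    intro ω hω
    have h1 : X ω < m := hω.1
    have h2 : m < Y ω := hω.2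
    exact h1.trans h2
  calc ENNReal.ofReal ((t ^ 2 / (σx ^ 2 + t ^ 2)) * (t ^ 2 / (σy ^ 2 + t ^ 2)))
      = ENNReal.ofReal (t ^ 2 / (σx ^ 2 + t ^ 2)) * ENNReal.ofReal (t ^ 2 / (σy ^ 2 + t ^ 2)) := by
        rw [ENNReal.ofReal_mul]
        positivity
    _ ≤ μ {ω | X ω < m} * μ {ω | m < Y ω} := mul_le_mul' hA hB
    _ = μ ({ω | X ω < m} ∩ {ω | m < Y ω}) := hAB.symm
    _ ≤ μ {ω | X ω < Y ω} := measure_mono hsub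
end
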